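/- arXiv:math/0612311 — 2 statements merged into one kernel-verified Lean document; each statement's English description precedes it below -/
import Mathlib

section
/- Let (R, m) be a commutative noetherian local ring with m-adic completion R̂, and let a = a_1, ..., a_e be elements of m such that R/(a) is complete. Then the natural ring homomorphism R/(a) → R̂/(a)R̂ is an isomorphism. -/
/-!
STATEMENT 0: Let (R, m) be a commutative noetherian local ring with m-adic completion R̂,
and let a = a_1, ..., a_e be elements of m such that R/(a) is complete.  Then the natural
ring homomorphism R/(a) → R̂/(a)R̂ is an isomorphism.
-/

open IsLocalRing TensorProduct

/-- If `M` is `I`-adically complete, the canonical map to the adic completion is bijective. -/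
lemma adicCompletion_of_bijective {R : Type*} [CommRing R] {M : Type*} [AddCommGroup M]
    [Module R M] (I : Ideal R) [h : IsAdicComplete I M] :
    Function.Bijective (AdicCompletion.of I M) := by
  constructor
  · intro x y hxy
    have hsub : ∀ n : ℕ, x - y ∈ (I ^ n • ⊤ : Submodule R M) := by
      intro n
      have h1 : (AdicCompletion.of I M x).val n = (AdicCompletion.of I M y).val n := by
        rw [hxy]
      simp only [AdicCompletion.of_apply, Submodule.mkQ_apply] at h1
      exact (Submodule.Quotient.eq _).mp h1
    have := IsHausdorff.haus h.toIsHausdorff (x - y) fun n => SModEq.zero.mpr (hsub n)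
    exact sub_eq_zero.mp this
  · intro y
    have hex : ∀ n : ℕ, ∃ m : M, Submodule.Quotient.mk m = y.val n := fun n =>
      Submodule.Quotient.mk_surjective _ (y.val n)
    choose f hf using hex
    have hcauchy : ∀ {m n : ℕ}, m ≤ n → f m ≡ f n [SMOD (I ^ m • ⊤ : Submodule R M)] := by
      intro m n hmn
      show (Submodule.Quotient.mk (f m) : M ⧸ (I ^ m • ⊤ : Submodule R M)) =
        Submodule.Quotient.mk (f n)
      rw [hf m, ← y.property hmn, ← hf n]
      rfl
    obtain ⟨L, hL⟩ := IsPrecomplete.prec h.toIsPrecomplete hcauchy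
    refine ⟨L, AdicCompletion.ext fun n => ?_⟩
    have : (Submodule.Quotient.mk (f n) : M ⧸ (I ^ n • ⊤ : Submodule R M)) =
        Submodule.Quotient.mk L := hL n
    calc (AdicCompletion.of I M L).val n = Submodule.Quotient.mk L := rfl
      _ = Submodule.Quotient.mk (f n) := this.symm
      _ = y.val n := hf n

theorem stmt0 (R : Type*) [CommRing R] [IsLocalRing R] [IsNoetherianRing R]
    (e : ℕ) (a : Fin e → R) (ha : ∀ i, a i ∈ maximalIdeal R)
    (hcomplete : IsAdicComplete
      ((maximalIdeal R).map (Ideal.Quotient.mk (Ideal.span (Set.range a))))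
      (R ⧸ Ideal.span (Set.range a))) :
    Function.Bijective
      (Ideal.quotientMap
        ((Ideal.span (Set.range a)).map (algebraMap R (AdicCompletion (maximalIdeal R) R)))
        (algebraMap R (AdicCompletion (maximalIdeal R) R))
        Ideal.le_comap_map) := by
  set I := maximalIdeal R with hI
  set J := Ideal.span (Set.range a) with hJ
  set A := AdicCompletion I R with hA
  set K := I.map (Ideal.Quotient.mk J) with hK
  -- the two filtrations on `R ⧸ J` agree
  have hsm : ∀ n : ℕ, (I ^ n • ⊤ : Submodule R (R ⧸ J)) =
      Submodule.restrictScalars R ((K ^ n • ⊤ : Ideal (R ⧸ J))) := by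
    intro n
    rw [Ideal.smul_top_eq_map]
    congr 1
    rw [smul_eq_mul, Ideal.mul_top, hK, ← Ideal.map_pow, Ideal.Quotient.algebraMap_eq]
  haveI hcomp' : IsAdicComplete I (R ⧸ J) := by
    refine { toIsHausdorff := ⟨fun x hx => ?_⟩, toIsPrecomplete := ⟨fun f hf => ?_⟩ }
    · refine IsHausdorff.haus hcomplete.toIsHausdorff x fun n => SModEq.zero.mpr ?_
      have := SModEq.zero.mp (hx n)
      rw [hsm n, Submodule.restrictScalars_mem] at this
      exact this
    · have hf' : ∀ {m n : ℕ}, m ≤ n →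
          f m ≡ f n [SMOD ((K ^ m • ⊤ : Ideal (R ⧸ J)) : Submodule (R ⧸ J) (R ⧸ J))] := by
        intro m n hmn
        refine SModEq.sub_mem.mpr ?_
        have := SModEq.sub_mem.mp (hf hmn)
        rw [hsm m, Submodule.restrictScalars_mem] at this
        exact this
      obtain ⟨L, hL⟩ := IsPrecomplete.prec hcomplete.toIsPrecomplete hf'
      refine ⟨L, fun n => SModEq.sub_mem.mpr ?_⟩
      rw [hsm n, Submodule.restrictScalars_mem]
      exact SModEq.sub_mem.mp (hL n)
  -- set up the chain of bijections
  set JA := J.map (algebraMap R A) with hJA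
  have hJAeq : (J • ⊤ : Submodule R A) = Submodule.restrictScalars R JA :=
    Ideal.smul_top_eq_map J
  let e1 : AdicCompletion I (R ⧸ J) ≃ₗ[A] A ⊗[R] (R ⧸ J) :=
    (AdicCompletion.ofTensorProductEquivOfFiniteNoetherian I (R ⧸ J)).symm
  let e2 : A ⊗[R] (R ⧸ J) ≃ₗ[R] A ⧸ (J • ⊤ : Submodule R A) :=
    TensorProduct.tensorQuotEquivQuotSMul A J
  let e3 : (A ⧸ (J • ⊤ : Submodule R A)) ≃ₗ[R] A ⧸ Submodule.restrictScalars R JA :=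
    Submodule.quotEquivOfEq _ _ hJAeq
  let e4 : (A ⧸ Submodule.restrictScalars R JA) ≃ₗ[R] A ⧸ JA :=
    Submodule.Quotient.restrictScalarsEquiv R JA
  have hbij : Function.Bijective
      (⇑e4 ∘ ⇑e3 ∘ ⇑e2 ∘ ⇑e1 ∘ ⇑(AdicCompletion.of I (R ⧸ J))) := by
    refine Function.Bijective.comp e4.bijective <| Function.Bijective.comp e3.bijective <|
      Function.Bijective.comp e2.bijective <| Function.Bijective.comp e1.bijective <|
      adicCompletion_of_bijective I
  have heq : ⇑(Ideal.quotientMap JA (algebraMap R A) Ideal.le_comap_map) =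
      ⇑e4 ∘ ⇑e3 ∘ ⇑e2 ∘ ⇑e1 ∘ ⇑(AdicCompletion.of I (R ⧸ J)) := by
    funext x
    obtain ⟨r, rfl⟩ := Ideal.Quotient.mk_surjective x
    simp only [Function.comp_apply]
    have h1 : e1 (AdicCompletion.of I (R ⧸ J) (Ideal.Quotient.mk J r)) =
        (1 : A) ⊗ₜ[R] (Ideal.Quotient.mk J r) :=
      AdicCompletion.ofTensorProductEquivOfFiniteNoetherian_symm_of I (R ⧸ J) _
    rw [h1]
    have h2 : e2 ((1 : A) ⊗ₜ[R] (Ideal.Quotient.mk J r)) =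
        Submodule.Quotient.mk (r • (1 : A)) := by
      show TensorProduct.tensorQuotEquivQuotSMul A J _ = _
      rw [TensorProduct.tensorQuotEquivQuotSMul]
      simp only [LinearEquiv.trans_apply]
      have : TensorProduct.comm R A (R ⧸ J) ((1 : A) ⊗ₜ[R] (Ideal.Quotient.mk J r)) =
          (Ideal.Quotient.mk J r) ⊗ₜ[R] (1 : A) := rfl
      rw [this]
      exact TensorProduct.quotTensorEquivQuotSMul_mk_tmul J r 1
    rw [h2]
    have h3 : e3 (Submodule.Quotient.mk (r • (1 : A))) =
        Submodule.Quotient.mk (r • (1 : A)) := Submodule.quotEquivOfEq_mk _ _ hJAeq _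
    rw [h3]
    have h4 : e4 (Submodule.Quotient.mk (r • (1 : A))) =
        Submodule.Quotient.mk (r • (1 : A)) :=
      Submodule.Quotient.restrictScalarsEquiv_mk R JA _
    rw [h4]
    rw [Ideal.quotientMap_mk, Algebra.algebraMap_eq_smul_one]
    rfl
  rw [heq]
  exact hbij
end

section
/- Let R be a commutative noetherian local ring, a = a_1, ..., a_e a list of elements of the maximal ideal, and M a complex of R-modules whose homology modules are all finitely generated. Then inf{n : H_n(K(a) ⊗_R M) ≠ 0} = inf{n : H_n(M) ≠ 0} and sup{n : H_n(M) ≠ 0} ≤ sup{n : H_n(K(a) ⊗_R M) ≠ 0} ≤ e + sup{n : H_n(M) ≠ 0}, where K(a) denotes the Koszul complex on a. In particular, K(a) ⊗_R M is homologically bounded if and only if M is homologically bounded. -/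
/-!
STATEMENT 2: Let R be a commutative noetherian local ring, a = a_1, ..., a_e a list of
elements of the maximal ideal, and M a complex of R-modules whose homology modules are all
finitely generated.  Then inf{n : H_n(K(a) ⊗ M) ≠ 0} = inf{n : H_n(M) ≠ 0} and
sup{n : H_n M ≠ 0} ≤ sup{n : H_n(K(a) ⊗ M) ≠ 0} ≤ e + sup{n : H_n M ≠ 0};
in particular K(a) ⊗ M is homologically bounded iff M is.

We use ℤ-indexed cochain complexes; `H n X` below denotes the *homological* degree-`n`
homology `H_n(X) = H^{-n}(X)`.  The Koszul complex tensored with `M`, `K(a) ⊗_R M`, is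
realized by its standard inductive mapping-cone description
`K(a₁,…,a_e) ⊗ M = Cone(a_e : K(a₁,…,a_{e-1}) ⊗ M → K(a₁,…,a_{e-1}) ⊗ M)`.
-/

open CategoryTheory IsLocalRing

/-- The Koszul complex on the list `as`, tensored with the complex `M`:
iterated mapping cone of multiplication maps. -/
noncomputable def koszulTensor (A : Type) [CommRing A] :
    List A → CochainComplex (ModuleCat A) ℤ → CochainComplex (ModuleCat A) ℤ
  | [], M => M
  | a :: as, M => CochainComplex.mappingCone (a • 𝟙 (koszulTensor A as M))

/-- Homological degree `n` homology of a ℤ-indexed cochain complex. -/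
noncomputable abbrev Hgl {A : Type} [CommRing A] (X : CochainComplex (ModuleCat A) ℤ)
    (n : ℤ) : ModuleCat A := X.homology (-n)

namespace Stmt2Aux

open Limits

variable {R : Type} [CommRing R]

lemma isZero_congr (X : CochainComplex (ModuleCat R) ℤ) {i j : ℤ} (h : i = j) :
    IsZero (X.homology i) ↔ IsZero (X.homology j) := by subst h; rfl

lemma finite_congr (X : CochainComplex (ModuleCat R) ℤ) {i j : ℤ} (h : i = j) :
    Module.Finite R (X.homology i) ↔ Module.Finite R (X.homology j) := by subst h; rfl

lemma nakayama [IsLocalRing R] (a : R) (ha : a ∈ maximalIdeal R)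
    (N : ModuleCat R) [Module.Finite R N] (h : Epi (a • 𝟙 N)) : IsZero N := by
  rw [ModuleCat.epi_iff_surjective] at h
  have hsm : (⊤ : Submodule R N) ≤ (Ideal.span {a}) • ⊤ := by
    intro x _
    obtain ⟨y, hy⟩ := h x
    have hxy : a • y = x := hy
    rw [← hxy]
    exact Submodule.smul_mem_smul (Ideal.mem_span_singleton_self a) trivial
  have hbot := Submodule.eq_bot_of_le_smul_of_le_jacobson_bot (Ideal.span {a}) ⊤
    (Module.Finite.fg_top) hsm
    (le_trans (by rwa [Ideal.span_le, Set.singleton_subset_iff]) (maximalIdeal_le_jacobson ⊥))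
  have : Subsingleton N := subsingleton_iff_forall_eq 0 |>.2 fun x => by
    have hx : x ∈ (⊥ : Submodule R N) := hbot ▸ Submodule.mem_top
    simpa using hx
  exact ModuleCat.isZero_of_subsingleton N

lemma homologyMap_smul (a : R) (M : CochainComplex (ModuleCat R) ℤ) (i : ℤ) :
    HomologicalComplex.homologyMap (a • 𝟙 M) i = a • 𝟙 (M.homology i) := by
  have h : ((HomologicalComplex.shortComplexFunctor (ModuleCat R) (ComplexShape.up ℤ) i).map
        (a • 𝟙 M))
      = a • ((HomologicalComplex.shortComplexFunctor (ModuleCat R) (ComplexShape.up ℤ) i).map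
        (𝟙 M)) := by
    ext <;> rfl
  rw [HomologicalComplex.homologyMap, h, ShortComplex.homologyMap_smul]
  rw [show ((HomologicalComplex.shortComplexFunctor (ModuleCat R) (ComplexShape.up ℤ) i).map
        (𝟙 M)) = 𝟙 _ from CategoryTheory.Functor.map_id _ _, ShortComplex.homologyMap_id]
  rfl

lemma fin_of_exact [IsNoetherianRing R] (S : ShortComplex (ModuleCat R)) (hS : S.Exact)
    (h1 : Module.Finite R S.X₁) (h3 : Module.Finite R S.X₃) : Module.Finite R S.X₂ := by
  have hex := hS.moduleCat_range_eq_ker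
  refine ⟨?_⟩
  apply Submodule.fg_of_fg_map_of_fg_inf_ker (S.g.hom : S.X₂ →ₗ[R] S.X₃)
  · exact IsNoetherian.noetherian _
  · rw [top_inf_eq, ← hex, LinearMap.range_eq_map]
    exact Submodule.FG.map _ h1.fg_top

section step

variable [IsLocalRing R] [IsNoetherianRing R]

lemma step (a : R) (ha : a ∈ maximalIdeal R) (M : CochainComplex (ModuleCat R) ℤ)
    (hfin : ∀ i : ℤ, Module.Finite R (M.homology i)) :
    (∀ i : ℤ, Module.Finite R ((CochainComplex.mappingCone (a • 𝟙 M)).homology i)) ∧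
    (∀ i : ℤ, ¬ IsZero (M.homology i) →
      ¬ IsZero ((CochainComplex.mappingCone (a • 𝟙 M)).homology i)) ∧
    (∀ i : ℤ, ¬ IsZero ((CochainComplex.mappingCone (a • 𝟙 M)).homology i) →
      ¬ IsZero (M.homology i) ∨ ¬ IsZero (M.homology (i + 1))) := by
  set F := HomotopyCategory.homologyFunctor (ModuleCat R) (ComplexShape.up ℤ) 0 with hF
  set T := CochainComplex.mappingCone.triangleh (a • 𝟙 M) with hT
  have dT : T ∈ distTriang (HomotopyCategory (ModuleCat R) (ComplexShape.up ℤ)) :=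
    HomotopyCategory.mappingCone_triangleh_distinguished (a • 𝟙 M)
  set X := CochainComplex.mappingCone (a • 𝟙 M) with hX
  -- isomorphisms between homotopy-category homology and complex homology
  let e : ∀ (i : ℤ) (K : CochainComplex (ModuleCat R) ℤ),
      (HomotopyCategory.homologyFunctor (ModuleCat R) (ComplexShape.up ℤ) i).obj
        ((HomotopyCategory.quotient _ _).obj K) ≅ K.homology i :=
    fun i K => (HomotopyCategory.homologyFunctorFactors (ModuleCat R) (ComplexShape.up ℤ) i).app K
  have key_epi : ∀ i : ℤ, IsZero (X.homology i) → IsZero (M.homology i) := by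
    intro i hz
    have h2 := F.homologySequence_exact₂ T dT i
    have hzX : IsZero ((F.shift i).obj T.obj₃) := hz.of_iso (e i X)
    have hg : ((F.shift i).map T.mor₂) = 0 := hzX.eq_of_tgt _ _
    have hepi : Epi ((F.shift i).map T.mor₁) := h2.epi_f hg
    have hnat : HomologicalComplex.homologyMap (a • 𝟙 M) i =
        (e i M).inv ≫ (F.shift i).map T.mor₁ ≫ (e i M).hom := by
      have hn := (HomotopyCategory.homologyFunctorFactors (ModuleCat R)
        (ComplexShape.up ℤ) i).hom.naturality (a • 𝟙 M)
      rw [Iso.eq_inv_comp]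
      exact hn.symm
    have hepi2 : Epi (HomologicalComplex.homologyMap (a • 𝟙 M) i) := by
      rw [hnat]
      exact epi_comp' inferInstance (epi_comp' hepi (@IsIso.epi_of_iso _ _ _ _ _ (Iso.isIso_hom (e i M))))
    rw [homologyMap_smul] at hepi2
    have := hfin i
    exact nakayama a ha (M.homology i) hepi2
  have key_mid : ∀ i : ℤ, IsZero (M.homology i) → IsZero (M.homology (i + 1)) →
      IsZero (X.homology i) := by
    intro i hz1 hz2
    have h3 := F.homologySequence_exact₃ T dT i (i + 1) rfl
    have hz1' : IsZero ((F.shift i).obj T.obj₂) := hz1.of_iso (e i M)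
    have hz2' : IsZero ((F.shift (i + 1)).obj T.obj₁) := hz2.of_iso (e (i + 1) M)
    have hf : ((F.shift i).map T.mor₂) = 0 := hz1'.eq_of_src _ _
    have hmono := h3.mono_g hf
    have hgz : F.homologySequenceδ T i (i + 1) rfl = 0 := hz2'.eq_of_tgt _ _
    have hz3 : IsZero ((F.shift i).obj T.obj₃) := by
      haveI := hmono
      exact IsZero.of_mono_eq_zero _ hgz
    exact hz3.of_iso (e i X).symm
  have key_fin : ∀ i : ℤ, Module.Finite R (X.homology i) := by
    intro i
    have h3 := F.homologySequence_exact₃ T dT i (i + 1) rfl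
    have hfin1 : Module.Finite R ((F.shift i).obj T.obj₂) := by
      have := hfin i
      exact Module.Finite.equiv (e i M).toLinearEquiv.symm
    have hfin3 : Module.Finite R ((F.shift (i + 1)).obj T.obj₁) := by
      have := hfin (i + 1)
      exact Module.Finite.equiv (e (i + 1) M).toLinearEquiv.symm
    have hfin2 : Module.Finite R
        ((HomotopyCategory.homologyFunctor (ModuleCat R) (ComplexShape.up ℤ) i).obj
          ((HomotopyCategory.quotient (ModuleCat R) (ComplexShape.up ℤ)).obj X)) :=
      fin_of_exact _ h3 hfin1 hfin3
    exact Module.Finite.equiv (e i X).toLinearEquiv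
  exact ⟨key_fin, fun i h hz => h (key_epi i hz),
    fun i h => by
      by_contra hc
      push_neg at hc
      exact h (key_mid i hc.1 hc.2)⟩

lemma main (M : CochainComplex (ModuleCat R) ℤ)
    (hfin : ∀ n : ℤ, Module.Finite R (Hgl M n)) (a : List R) :
    (∀ x ∈ a, x ∈ maximalIdeal R) →
    (∀ n : ℤ, Module.Finite R (Hgl (koszulTensor R a M) n)) ∧
    (∀ n : ℤ, ¬ IsZero (Hgl M n) → ¬ IsZero (Hgl (koszulTensor R a M) n)) ∧
    (∀ n : ℤ, ¬ IsZero (Hgl (koszulTensor R a M) n) →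
      ∃ k : ℤ, 0 ≤ k ∧ k ≤ (a.length : ℤ) ∧ ¬ IsZero (Hgl M (n - k))) := by
  induction a with
  | nil =>
    intro _
    exact ⟨hfin, fun n h => h, fun n h => ⟨0, le_refl 0, by simp, by simpa [koszulTensor] using h⟩⟩
  | cons x as ih =>
    intro ha
    obtain ⟨ih1, ih2, ih3⟩ := ih (fun y hy => ha y (List.mem_cons_of_mem _ hy))
    set N := koszulTensor R as M with hN
    have hfinN : ∀ i : ℤ, Module.Finite R (N.homology i) := fun i =>
      (finite_congr N (neg_neg i)).mp (ih1 (-i))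
    obtain ⟨s1, s2, s3⟩ := step x (ha x (List.mem_cons_self (a := x) (l := as))) N hfinN
    have hunf : koszulTensor R (x :: as) M = CochainComplex.mappingCone (x • 𝟙 N) := rfl
    rw [hunf]
    refine ⟨fun n => s1 (-n), fun n h => s2 (-n) (ih2 n h), fun n h => ?_⟩
    rcases s3 (-n) h with h1 | h2
    · obtain ⟨k, hk0, hkl, hk⟩ := ih3 n h1
      refine ⟨k, hk0, le_trans hkl ?_, hk⟩
      simp only [List.length_cons]
      push_cast
      omega
    · have h2' : ¬ IsZero (Hgl N (n - 1)) := by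
        rwa [not_congr (isZero_congr N (by omega : (-(n - 1) : ℤ) = -n + 1))]
      obtain ⟨k, hk0, hkl, hk⟩ := ih3 (n - 1) h2'
      refine ⟨k + 1, by omega, ?_, ?_⟩
      · simp only [List.length_cons]
        push_cast
        omega
      · rwa [not_congr (isZero_congr M (by omega : (-(n - (k + 1)) : ℤ) = -(n - 1 - k)))]

lemma setLemma (S S' : Set ℤ) (e : ℤ) (he : 0 ≤ e) (h1 : S ⊆ S')
    (h2 : ∀ n ∈ S', ∃ k : ℤ, 0 ≤ k ∧ k ≤ e ∧ n - k ∈ S) :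
    sInf S' = sInf S ∧ sSup S ≤ sSup S' ∧ sSup S' ≤ e + sSup S ∧
      ((∃ b : ℤ, ∀ n : ℤ, b < |n| → n ∉ S') ↔ (∃ b : ℤ, ∀ n : ℤ, b < |n| → n ∉ S)) := by
  have hne : S'.Nonempty ↔ S.Nonempty := by
    constructor
    · rintro ⟨n, hn⟩
      obtain ⟨k, _, _, hk⟩ := h2 n hn
      exact ⟨n - k, hk⟩
    · rintro ⟨n, hn⟩
      exact ⟨n, h1 hn⟩
  have hbbS : BddBelow S → BddBelow S' := by
    rintro ⟨b, hb⟩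
    refine ⟨b, fun n hn => ?_⟩
    obtain ⟨k, hk0, _, hk⟩ := h2 n hn
    have := hb hk
    omega
  have hbaS : BddAbove S → BddAbove S' := by
    rintro ⟨b, hb⟩
    refine ⟨b + e, fun n hn => ?_⟩
    obtain ⟨k, hk0, hke, hk⟩ := h2 n hn
    have := hb hk
    omega
  refine ⟨?_, ?_, ?_, ?_⟩
  · by_cases hS : S.Nonempty
    · by_cases hbdd : BddBelow S
      · refine le_antisymm (csInf_le (hbbS hbdd) (h1 (Int.csInf_mem hS hbdd))) ?_
        refine le_csInf (hne.mpr hS) fun n hn => ?_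
        obtain ⟨k, hk0, _, hk⟩ := h2 n hn
        have := csInf_le hbdd hk
        omega
      · rw [Int.csInf_of_not_bddBelow hbdd,
          Int.csInf_of_not_bddBelow (fun h => hbdd (h.mono h1))]
    · have hS' : S' = ∅ := Set.not_nonempty_iff_eq_empty.1 (fun h => hS (hne.1 h))
      rw [hS', Set.not_nonempty_iff_eq_empty.1 hS]
  · by_cases hS : S.Nonempty
    · by_cases hbdd : BddAbove S'
      · exact csSup_le_csSup hbdd hS h1
      · rw [Int.csSup_of_not_bddAbove hbdd,
          Int.csSup_of_not_bddAbove (fun h => hbdd (hbaS h))]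
    · have hS' : S' = ∅ := Set.not_nonempty_iff_eq_empty.1 (fun h => hS (hne.1 h))
      rw [hS', Set.not_nonempty_iff_eq_empty.1 hS]
  · by_cases hS : S.Nonempty
    · by_cases hbdd : BddAbove S
      · refine csSup_le (hne.mpr hS) fun n hn => ?_
        obtain ⟨k, hk0, hke, hk⟩ := h2 n hn
        have := le_csSup hbdd hk
        omega
      · rw [Int.csSup_of_not_bddAbove (fun h => hbdd ((h.mono h1))),
          Int.csSup_of_not_bddAbove hbdd]
        omega
    · have hS' : S' = ∅ := Set.not_nonempty_iff_eq_empty.1 (fun h => hS (hne.1 h))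
      rw [hS', Set.not_nonempty_iff_eq_empty.1 hS, Int.csSup_empty]
      omega
  · constructor
    · rintro ⟨b, hb⟩
      exact ⟨b, fun n hn h => hb n hn (h1 h)⟩
    · rintro ⟨b, hb⟩
      refine ⟨b + e, fun n hn hmem => ?_⟩
      obtain ⟨k, hk0, hke, hk⟩ := h2 n hmem
      have hle : ¬ b < |n - k| := fun h => hb _ h hk
      have h1' := abs_le.mp (not_lt.mp hle)
      rcases abs_cases n with ⟨h, _⟩ | ⟨h, _⟩ <;> rw [h] at hn <;> omega

end step

end Stmt2Aux

theorem stmt2 (R : Type) [CommRing R] [IsLocalRing R] [IsNoetherianRing R]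
    (a : List R) (ha : ∀ x ∈ a, x ∈ maximalIdeal R)
    (M : CochainComplex (ModuleCat R) ℤ)
    (hfin : ∀ n : ℤ, Module.Finite R (Hgl M n)) :
    sInf {n : ℤ | ¬ Limits.IsZero (Hgl (koszulTensor R a M) n)} =
      sInf {n : ℤ | ¬ Limits.IsZero (Hgl M n)} ∧
    sSup {n : ℤ | ¬ Limits.IsZero (Hgl M n)} ≤
      sSup {n : ℤ | ¬ Limits.IsZero (Hgl (koszulTensor R a M) n)} ∧
    sSup {n : ℤ | ¬ Limits.IsZero (Hgl (koszulTensor R a M) n)} ≤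
      (a.length : ℤ) + sSup {n : ℤ | ¬ Limits.IsZero (Hgl M n)} ∧
    ((∃ b : ℤ, ∀ n : ℤ, b < |n| → Limits.IsZero (Hgl (koszulTensor R a M) n)) ↔
      (∃ b : ℤ, ∀ n : ℤ, b < |n| → Limits.IsZero (Hgl M n))) := by
  classical
  obtain ⟨m1, m2, m3⟩ := Stmt2Aux.main M hfin a ha
  set S : Set ℤ := {n : ℤ | ¬ Limits.IsZero (Hgl M n)} with hS
  set S' : Set ℤ := {n : ℤ | ¬ Limits.IsZero (Hgl (koszulTensor R a M) n)} with hS'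
  have h1 : S ⊆ S' := fun n hn => m2 n hn
  have h2 : ∀ n ∈ S', ∃ k : ℤ, 0 ≤ k ∧ k ≤ (a.length : ℤ) ∧ n - k ∈ S :=
    fun n hn => m3 n hn
  obtain ⟨c1, c2, c3, c4⟩ := Stmt2Aux.setLemma S S' (a.length : ℤ) (by positivity) h1 h2
  refine ⟨c1, c2, c3, ?_⟩
  constructor
  · rintro ⟨b, hb⟩
    obtain ⟨b', hb'⟩ := c4.1 ⟨b, fun n hn h => h (hb n hn)⟩
    exact ⟨b', fun n hn => not_not.1 (fun h => hb' n hn h)⟩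
  · rintro ⟨b, hb⟩
    obtain ⟨b', hb'⟩ := c4.2 ⟨b, fun n hn h => h (hb n hn)⟩
    exact ⟨b', fun n hn => not_not.1 (fun h => hb' n hn h)⟩
end
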